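/- Let ω ∈ ℤ[X] be a polynomial of degree k ≥ 2 and suppose there are reals s, t > 0 such that for every δ > 0 there is a constant C_δ with ∫₀¹∫₀¹ W_ω(u, v; N)^{2s} du dv ≤ C_δ·N^{2s − t + δ} for all positive integers N. Fix 0 < α < 1 and ε > 0 sufficiently small, set ζ₁ = 1/⌈N^{2 + ε − α}⌉ and ζ₂ = 1/⌈N^{k + 1 + ε − α}⌉, and partition [0,1)² into the ζ₁⁻¹·ζ₂⁻¹ squares [ℓζ₁, (ℓ+1)ζ₁) × [mζ₂, (m+1)ζ₂), 0 ≤ ℓ < ζ₁⁻¹, 0 ≤ m < ζ₂⁻¹. Let R̃ be the set of those squares that contain a point (x, y) with W_ω(x, y; N) ≥ N^α. Then for every δ > 0 there is a constant C'_δ such that #R̃ ≤ C'_δ·(ζ₁·ζ₂)^{−1}·N^{2s(1−α) − t + δ} for all positive integers N. -/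

import Mathlib

open MeasureTheory Finset Polynomial

/-- `e(t) = exp(2πit)`. -/
noncomputable def e (t : ℝ) : ℂ := Complex.exp (2 * Real.pi * Complex.I * t)

/-- The Weyl sum `S_ω(x, y; N) = ∑_{n=1}^{N} e(x·n + y·ω(n))`. -/
noncomputable def WeylS (ω : Polynomial ℤ) (x y : ℝ) (N : ℕ) : ℂ :=
  ∑ n ∈ Finset.Icc 1 N, e (x * (n : ℝ) + y * ((ω.eval (n : ℤ) : ℤ) : ℝ))

/-- `η(k)` from the paper. -/
def etaP (k : ℕ) : ℕ :=
  if 2 * k + 2 ≥ (Nat.sqrt (2 * k + 2)) ^ 2 + Nat.sqrt (2 * k + 2) then 0 else 1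

/-- `s₀(k)` from the paper. -/
def s0 (k : ℕ) : ℕ :=
  if k = 2 then 3 else if k = 3 then 5 else if k = 4 then 8 else if k = 5 then 12
  else if k = 6 then 18 else if k = 7 then 24 else if k = 8 then 31 else if k = 9 then 40
  else if k = 10 then 49 else k * (k - 1) / 2 + Nat.sqrt (2 * k + 2) - etaP k

/-- The completed sum
`W_ω(x, y; N) = ∑_{h=−N}^{N} (1/(|h|+1))·|∑_{n=1}^{N} e(h·n/N + x·n + y·ω(n))|`. -/
noncomputable def WeylW (ω : Polynomial ℤ) (x y : ℝ) (N : ℕ) : ℝ :=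
  ∑ h ∈ Finset.Icc (-(N : ℤ)) (N : ℤ), (1 / (|(h : ℝ)| + 1)) *
    ‖(∑ n ∈ Finset.Icc 1 N,
      e ((h : ℝ) * (n : ℝ) / (N : ℝ) + x * (n : ℝ) + y * ((ω.eval (n : ℤ) : ℤ) : ℝ)))‖

/-! ### Auxiliary lemmas -/

lemma continuous_e : Continuous e :=
  Complex.continuous_exp.comp (continuous_const.mul Complex.continuous_ofReal)

lemma abs_exp_I_sub_one (u : ℝ) : ‖Complex.exp (u * Complex.I) - 1‖ ≤ |u| := by
  rw [Complex.exp_mul_I]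
  have h : (Complex.cos u + Complex.sin u * Complex.I - 1)
      = Complex.ofReal (Real.cos u - 1) + Complex.ofReal (Real.sin u) * Complex.I := by
    push_cast [Complex.ofReal_cos, Complex.ofReal_sin]; ring
  have hsq : ‖Complex.cos u + Complex.sin u * Complex.I - 1‖ ^ 2
      = 2 - 2 * Real.cos u := by
    rw [Complex.sq_norm, h, Complex.normSq_add_mul_I]
    nlinarith [Real.sin_sq_add_cos_sq u]
  have hcos := Real.one_sub_sq_div_two_le_cos (x := u)
  nlinarith [norm_nonneg (Complex.cos u + Complex.sin u * Complex.I - 1), hsq,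
    abs_nonneg u, sq_abs u]

lemma e_add (a b : ℝ) : e (a + b) = e a * e b := by
  unfold e; rw [← Complex.exp_add]; push_cast; ring_nf

lemma abs_e (t : ℝ) : ‖e t‖ = 1 := by
  unfold e
  rw [show (2 * Real.pi * Complex.I * t) = (2*Real.pi*t:ℝ)*Complex.I by push_cast; ring]
  exact Complex.norm_exp_ofReal_mul_I _

lemma abs_e_sub_e (a b : ℝ) : ‖e a - e b‖ ≤ 2 * Real.pi * |a - b| := by
  have h1 : e a - e b = e b * (e (a - b) - 1) := by
    rw [mul_sub, ← e_add, mul_one]; ring_nf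
  have h2 : e (a-b) = Complex.exp ((2 * Real.pi * (a-b) : ℝ) * Complex.I) := by
    unfold e; push_cast; ring_nf
  rw [h1, norm_mul, abs_e, one_mul, h2]
  calc ‖Complex.exp ((2 * Real.pi * (a-b) : ℝ) * Complex.I) - 1‖
      ≤ |2 * Real.pi * (a-b)| := abs_exp_I_sub_one _
    _ = 2 * Real.pi * |a - b| := by
        rw [abs_mul, abs_of_nonneg (by positivity : (0:ℝ) ≤ 2*Real.pi)]

lemma weylW_nonneg (ω : Polynomial ℤ) (x y : ℝ) (N : ℕ) : 0 ≤ WeylW ω x y N := by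
  apply Finset.sum_nonneg
  intro h _
  have : (0:ℝ) < |(h:ℝ)| + 1 := by positivity
  positivity

lemma continuous_weylW (ω : Polynomial ℤ) (N : ℕ) :
    Continuous fun p : ℝ × ℝ => WeylW ω p.1 p.2 N := by
  unfold WeylW
  apply continuous_finset_sum
  intro h _
  apply Continuous.mul continuous_const
  apply continuous_norm.comp
  apply continuous_finset_sum
  intro n _
  exact continuous_e.comp (by continuity)

lemma H_bound (N : ℕ) :
    ∑ h ∈ Finset.Icc (-(N : ℤ)) (N : ℤ), (1 / (|(h : ℝ)| + 1)) ≤ 2 + 2 * Real.log (N+1) := by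
  classical
  set f : ℤ → ℝ := fun h => 1 / (|(h:ℝ)| + 1) with hf
  have hf0 : ∀ h : ℤ, 0 ≤ f h := by
    intro h; have : (0:ℝ) < |(h:ℝ)| + 1 := by positivity
    positivity
  have hsub : Finset.Icc (-(N:ℤ)) (N:ℤ) ⊆
      (Finset.range (N+1)).image (fun j : ℕ => (j:ℤ)) ∪
      (Finset.range (N+1)).image (fun j : ℕ => -(j:ℤ)) := by
    intro h hh
    simp only [Finset.mem_Icc] at hh
    simp only [Finset.mem_union, Finset.mem_image, Finset.mem_range]
    rcases le_or_gt 0 h with h0 | h0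
    · exact Or.inl ⟨h.toNat, by omega, by omega⟩
    · exact Or.inr ⟨(-h).toNat, by omega, by omega⟩
  have h1 : ∑ h ∈ Finset.Icc (-(N:ℤ)) (N:ℤ), f h ≤
      ∑ h ∈ (Finset.range (N+1)).image (fun j : ℕ => (j:ℤ)) ∪
        (Finset.range (N+1)).image (fun j : ℕ => -(j:ℤ)), f h :=
    Finset.sum_le_sum_of_subset_of_nonneg hsub (fun i _ _ => hf0 i)
  have h2 : ∑ h ∈ (Finset.range (N+1)).image (fun j : ℕ => (j:ℤ)) ∪
        (Finset.range (N+1)).image (fun j : ℕ => -(j:ℤ)), f h ≤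
      ∑ h ∈ (Finset.range (N+1)).image (fun j : ℕ => (j:ℤ)), f h +
      ∑ h ∈ (Finset.range (N+1)).image (fun j : ℕ => -(j:ℤ)), f h := by
    have hU : (Finset.range (N+1)).image (fun j : ℕ => (j:ℤ)) ∪
        (Finset.range (N+1)).image (fun j : ℕ => -(j:ℤ)) =
        (Finset.range (N+1)).image (fun j : ℕ => (j:ℤ)) ∪
        ((Finset.range (N+1)).image (fun j : ℕ => -(j:ℤ)) \
          (Finset.range (N+1)).image (fun j : ℕ => (j:ℤ))) := by
      rw [Finset.union_sdiff_self_eq_union]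
    rw [hU, Finset.sum_union Finset.disjoint_sdiff]
    have := Finset.sum_le_sum_of_subset_of_nonneg
      (Finset.sdiff_subset (s := (Finset.range (N+1)).image (fun j : ℕ => -(j:ℤ)))
        (t := (Finset.range (N+1)).image (fun j : ℕ => (j:ℤ)))) (fun i _ _ => hf0 i)
    linarith
  have him1 : ∑ h ∈ (Finset.range (N+1)).image (fun j : ℕ => (j:ℤ)), f h
      = ∑ j ∈ Finset.range (N+1), 1 / ((j:ℝ) + 1) := by
    rw [Finset.sum_image (by intro a _ b _ hab; have hab' : (a:ℤ) = (b:ℤ) := hab; exact_mod_cast hab')]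
    apply Finset.sum_congr rfl
    intro j _
    simp [hf, abs_of_nonneg (by positivity : (0:ℝ) ≤ (j:ℝ))]
  have him2 : ∑ h ∈ (Finset.range (N+1)).image (fun j : ℕ => -(j:ℤ)), f h
      = ∑ j ∈ Finset.range (N+1), 1 / ((j:ℝ) + 1) := by
    rw [Finset.sum_image (by intro a _ b _ hab; have hab' : -(a:ℤ) = -(b:ℤ) := hab; omega)]
    apply Finset.sum_congr rfl
    intro j _
    simp [hf, abs_of_nonneg (by positivity : (0:ℝ) ≤ (j:ℝ))]
  have hharm : ∑ j ∈ Finset.range (N+1), 1 / ((j:ℝ) + 1) = (harmonic (N+1) : ℝ) := by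
    rw [harmonic]
    push_cast
    apply Finset.sum_congr rfl
    intro j _
    rw [one_div]
  have hlog := harmonic_le_one_add_log (N+1)
  calc ∑ h ∈ Finset.Icc (-(N:ℤ)) (N:ℤ), f h
      ≤ 2 * (harmonic (N+1) : ℝ) := by rw [him1, him2, hharm] at h2; linarith
    _ ≤ 2 + 2 * Real.log (N+1) := by push_cast at hlog ⊢; linarith

lemma poly_bound (ω : Polynomial ℤ) (k : ℕ) (hω : ω.natDegree = k) :
    ∃ Cω : ℝ, 0 ≤ Cω ∧ ∀ N : ℕ, ∀ n ∈ Finset.Icc 1 N,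
      |((ω.eval (n : ℤ) : ℤ) : ℝ)| ≤ Cω * (N : ℝ) ^ (k : ℕ) := by
  refine ⟨∑ i ∈ Finset.range (k+1), |((ω.coeff i : ℤ) : ℝ)|,
    Finset.sum_nonneg fun i _ => abs_nonneg _, ?_⟩
  intro N n hn
  simp only [Finset.mem_Icc] at hn
  have hn1 : 1 ≤ n := hn.1
  have hnN : n ≤ N := hn.2
  have heval : ω.eval (n : ℤ) = ∑ i ∈ Finset.range (k+1), ω.coeff i * (n:ℤ)^i := by
    rw [← hω]
    exact ω.eval_eq_sum_range (n : ℤ)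
  rw [heval]
  push_cast
  calc |∑ i ∈ Finset.range (k+1), ((ω.coeff i : ℝ) * (n:ℝ)^i)|
      ≤ ∑ i ∈ Finset.range (k+1), |(ω.coeff i : ℝ) * (n:ℝ)^i| := Finset.abs_sum_le_sum_abs _ _
    _ ≤ ∑ i ∈ Finset.range (k+1), |(ω.coeff i : ℝ)| * (N:ℝ)^k := by
        apply Finset.sum_le_sum
        intro i hi
        rw [abs_mul]
        apply mul_le_mul_of_nonneg_left _ (abs_nonneg _)
        rw [abs_of_nonneg (by positivity : (0:ℝ) ≤ (n:ℝ)^i)]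
        calc (n:ℝ)^i ≤ (N:ℝ)^i := by
              apply pow_le_pow_left₀ (by positivity) (by exact_mod_cast hnN)
          _ ≤ (N:ℝ)^k := by
              apply pow_le_pow_right₀ (by exact_mod_cast hn1.trans hnN)
              exact Finset.mem_range_succ_iff.mp hi
    _ = (∑ i ∈ Finset.range (k+1), |(ω.coeff i : ℝ)|) * (N:ℝ)^k := by
        rw [Finset.sum_mul]

lemma weylW_diff (ω : Polynomial ℤ) (N : ℕ) (x y x' y' d₁ d₂ P : ℝ)
    (hx : |x - x'| ≤ d₁) (hy : |y - y'| ≤ d₂) (hd₁ : 0 ≤ d₁) (hd₂ : 0 ≤ d₂)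
    (hPev : ∀ n ∈ Finset.Icc 1 N, |((ω.eval (n : ℤ) : ℤ) : ℝ)| ≤ P) :
    |WeylW ω x y N - WeylW ω x' y' N| ≤
      (∑ h ∈ Finset.Icc (-(N : ℤ)) (N : ℤ), (1 / (|(h : ℝ)| + 1))) *
        (2 * Real.pi * (N * (d₁ * N + d₂ * P))) := by
  unfold WeylW
  rw [← Finset.sum_sub_distrib]
  calc |∑ h ∈ Finset.Icc (-(N : ℤ)) (N : ℤ), ((1 / (|(h : ℝ)| + 1)) *
          ‖(∑ n ∈ Finset.Icc 1 N,
            e ((h : ℝ) * (n : ℝ) / (N : ℝ) + x * (n : ℝ) + y * ((ω.eval (n : ℤ) : ℤ) : ℝ)))‖ -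
        (1 / (|(h : ℝ)| + 1)) *
          ‖(∑ n ∈ Finset.Icc 1 N,
            e ((h : ℝ) * (n : ℝ) / (N : ℝ) + x' * (n : ℝ) + y' * ((ω.eval (n : ℤ) : ℤ) : ℝ)))‖)|
      ≤ ∑ h ∈ Finset.Icc (-(N : ℤ)) (N : ℤ), (1 / (|(h : ℝ)| + 1)) *
          (2 * Real.pi * (N * (d₁ * N + d₂ * P))) := by
        apply (Finset.abs_sum_le_sum_abs _ _).trans
        apply Finset.sum_le_sum
        intro h _
        rw [← mul_sub, abs_mul]
        have hpos : (0:ℝ) < |(h:ℝ)| + 1 := by positivity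
        rw [abs_of_nonneg (by positivity : (0:ℝ) ≤ 1 / (|(h:ℝ)| + 1))]
        apply mul_le_mul_of_nonneg_left _ (by positivity)
        calc |‖(∑ n ∈ Finset.Icc 1 N,
                e ((h : ℝ) * (n : ℝ) / (N : ℝ) + x * (n : ℝ) + y * ((ω.eval (n : ℤ) : ℤ) : ℝ)))‖ -
              ‖(∑ n ∈ Finset.Icc 1 N,
                e ((h : ℝ) * (n : ℝ) / (N : ℝ) + x' * (n : ℝ) + y' * ((ω.eval (n : ℤ) : ℤ) : ℝ)))‖|
            ≤ ‖((∑ n ∈ Finset.Icc 1 N,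
                e ((h : ℝ) * (n : ℝ) / (N : ℝ) + x * (n : ℝ) + y * ((ω.eval (n : ℤ) : ℤ) : ℝ))) -
              (∑ n ∈ Finset.Icc 1 N,
                e ((h : ℝ) * (n : ℝ) / (N : ℝ) + x' * (n : ℝ) + y' * ((ω.eval (n : ℤ) : ℤ) : ℝ))))‖ :=
              abs_norm_sub_norm_le _ _
          _ ≤ ∑ n ∈ Finset.Icc 1 N, ‖
                (e ((h : ℝ) * (n : ℝ) / (N : ℝ) + x * (n : ℝ) + y * ((ω.eval (n : ℤ) : ℤ) : ℝ)) -
                 e ((h : ℝ) * (n : ℝ) / (N : ℝ) + x' * (n : ℝ) + y' * ((ω.eval (n : ℤ) : ℤ) : ℝ)))‖ := by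
              rw [← Finset.sum_sub_distrib]
              exact (norm_sum_le _ _)
          _ ≤ ∑ n ∈ Finset.Icc 1 N, (2 * Real.pi * (d₁ * N + d₂ * P)) := by
              apply Finset.sum_le_sum
              intro n hn
              apply (abs_e_sub_e _ _).trans
              apply mul_le_mul_of_nonneg_left _ (by positivity)
              have hnN : (n:ℝ) ≤ N := by
                simp only [Finset.mem_Icc] at hn; exact_mod_cast hn.2
              have hev := hPev n hn
              calc |((h : ℝ) * (n : ℝ) / (N : ℝ) + x * (n : ℝ) + y * ((ω.eval (n : ℤ) : ℤ) : ℝ)) -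
                    ((h : ℝ) * (n : ℝ) / (N : ℝ) + x' * (n : ℝ) + y' * ((ω.eval (n : ℤ) : ℤ) : ℝ))|
                  = |(x - x') * (n:ℝ) + (y - y') * ((ω.eval (n : ℤ) : ℤ) : ℝ)| := by
                    congr 1; ring
                _ ≤ |(x - x')| * (n:ℝ) + |(y - y')| * |((ω.eval (n : ℤ) : ℤ) : ℝ)| := by
                    refine (abs_add_le _ _).trans ?_
                    rw [abs_mul, abs_mul, Nat.abs_cast]
                _ ≤ d₁ * N + d₂ * P := by
                    have h1 : |(x - x')| * (n:ℝ) ≤ d₁ * N := by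
                      apply mul_le_mul hx hnN (by positivity) hd₁
                    have h2 : |(y - y')| * |((ω.eval (n : ℤ) : ℤ) : ℝ)| ≤ d₂ * P := by
                      apply mul_le_mul hy hev (abs_nonneg _) hd₂
                    linarith
          _ ≤ N * (2 * Real.pi * (d₁ * N + d₂ * P)) := by
              rw [Finset.sum_const, Nat.card_Icc, Nat.add_sub_cancel, nsmul_eq_mul]
          _ = 2 * Real.pi * (N * (d₁ * N + d₂ * P)) := by ring
    _ = (∑ h ∈ Finset.Icc (-(N : ℤ)) (N : ℤ), (1 / (|(h : ℝ)| + 1))) *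
        (2 * Real.pi * (N * (d₁ * N + d₂ * P))) := by
        rw [← Finset.sum_mul]

open intervalIntegral in
lemma integral_decomp (f : ℝ → ℝ → ℝ) (hf : Continuous (Function.uncurry f))
    (L M : ℕ) (hL : (L:ℝ) ≠ 0) (hM : (M:ℝ) ≠ 0) :
    (∫ u in (0:ℝ)..1, ∫ v in (0:ℝ)..1, f u v) =
      ∑ ℓ ∈ Finset.range L, ∑ m ∈ Finset.range M,
        ∫ u in ((ℓ:ℝ)*(1/(L:ℝ)))..(((ℓ:ℝ)+1)*(1/(L:ℝ))),
          ∫ v in ((m:ℝ)*(1/(M:ℝ)))..(((m:ℝ)+1)*(1/(M:ℝ))), f u v := by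
  have hfu : ∀ u : ℝ, Continuous (f u) := fun u => hf.uncurry_left u
  have hcont_g : ∀ c d : ℝ, Continuous fun u => ∫ v in c..d, f u v := fun c d =>
    continuous_parametric_intervalIntegral_of_continuous' hf c d
  have inner : ∀ u : ℝ, (∫ v in (0:ℝ)..1, f u v)
      = ∑ m ∈ Finset.range M, ∫ v in ((m:ℝ)*(1/(M:ℝ)))..(((m:ℝ)+1)*(1/(M:ℝ))), f u v := by
    intro u
    have h := intervalIntegral.sum_integral_adjacent_intervals
      (a := fun m : ℕ => (m:ℝ)*(1/(M:ℝ))) (n := M) (f := f u) (μ := volume)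
      (fun k _ => (hfu u).intervalIntegrable _ _)
    rw [show ((0:ℕ):ℝ)*(1/(M:ℝ)) = 0 by push_cast; ring,
      show ((M:ℕ):ℝ)*(1/(M:ℝ)) = 1 by field_simp] at h
    rw [← h]
    apply Finset.sum_congr rfl
    intro m _
    congr 1
    push_cast; ring
  calc (∫ u in (0:ℝ)..1, ∫ v in (0:ℝ)..1, f u v)
      = ∫ u in (0:ℝ)..1, ∑ m ∈ Finset.range M,
          ∫ v in ((m:ℝ)*(1/(M:ℝ)))..(((m:ℝ)+1)*(1/(M:ℝ))), f u v := by
        apply intervalIntegral.integral_congr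
        intro u _
        exact inner u
    _ = ∑ ℓ ∈ Finset.range L, ∫ u in ((ℓ:ℝ)*(1/(L:ℝ)))..(((ℓ:ℝ)+1)*(1/(L:ℝ))),
          ∑ m ∈ Finset.range M,
          ∫ v in ((m:ℝ)*(1/(M:ℝ)))..(((m:ℝ)+1)*(1/(M:ℝ))), f u v := by
        have h := intervalIntegral.sum_integral_adjacent_intervals
          (a := fun ℓ : ℕ => (ℓ:ℝ)*(1/(L:ℝ))) (n := L)
          (f := fun u => ∑ m ∈ Finset.range M,
            ∫ v in ((m:ℝ)*(1/(M:ℝ)))..(((m:ℝ)+1)*(1/(M:ℝ))), f u v) (μ := volume)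
          (fun k _ => (continuous_finset_sum _ fun m _ => hcont_g _ _).intervalIntegrable _ _)
        rw [show ((0:ℕ):ℝ)*(1/(L:ℝ)) = 0 by push_cast; ring,
          show ((L:ℕ):ℝ)*(1/(L:ℝ)) = 1 by field_simp] at h
        rw [← h]
        apply Finset.sum_congr rfl
        intro ℓ _
        congr 1
        push_cast; ring
    _ = ∑ ℓ ∈ Finset.range L, ∑ m ∈ Finset.range M,
        ∫ u in ((ℓ:ℝ)*(1/(L:ℝ)))..(((ℓ:ℝ)+1)*(1/(L:ℝ))),
          ∫ v in ((m:ℝ)*(1/(M:ℝ)))..(((m:ℝ)+1)*(1/(M:ℝ))), f u v := by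
        apply Finset.sum_congr rfl
        intro ℓ _
        apply intervalIntegral.integral_finset_sum
        intro m _
        exact (hcont_g _ _).intervalIntegrable _ _

open intervalIntegral in
lemma square_lower (f : ℝ → ℝ → ℝ) (hf : Continuous (Function.uncurry f))
    (c a b a' b' : ℝ) (hab : a ≤ b) (hab' : a' ≤ b')
    (hge : ∀ u ∈ Set.Icc a b, ∀ v ∈ Set.Icc a' b', c ≤ f u v) :
    c * ((b - a) * (b' - a')) ≤ ∫ u in a..b, ∫ v in a'..b', f u v := by
  have hfu : ∀ u : ℝ, Continuous (f u) := fun u => hf.uncurry_left u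
  have hcont_g : Continuous fun u => ∫ v in a'..b', f u v :=
    continuous_parametric_intervalIntegral_of_continuous' hf a' b'
  have inner : ∀ u ∈ Set.Icc a b, c * (b' - a') ≤ ∫ v in a'..b', f u v := by
    intro u hu
    have h1 : (∫ v in a'..b', c) ≤ ∫ v in a'..b', f u v := by
      apply intervalIntegral.integral_mono_on hab'
        (intervalIntegrable_const) ((hfu u).intervalIntegrable _ _)
      exact hge u hu
    rwa [intervalIntegral.integral_const, smul_eq_mul, mul_comm] at h1
  have h2 : (∫ u in a..b, c * (b' - a')) ≤ ∫ u in a..b, ∫ v in a'..b', f u v := by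
    apply intervalIntegral.integral_mono_on hab
      (intervalIntegrable_const) (hcont_g.intervalIntegrable _ _)
    exact inner
  rw [intervalIntegral.integral_const, smul_eq_mul] at h2
  calc c * ((b - a) * (b' - a')) = (b - a) * (c * (b' - a')) := by ring
    _ ≤ _ := h2

set_option maxHeartbeats 1000000 in
open scoped Classical in
theorem counting_squares_with_large_values
    (k : ℕ) (hk : 2 ≤ k) (ω : Polynomial ℤ) (hω : ω.natDegree = k)
    (s t : ℝ) (hs : 0 < s) (ht : 0 < t)
    (hmean : ∀ δ : ℝ, 0 < δ → ∃ Cδ : ℝ, ∀ N : ℕ, 0 < N →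
      (∫ u in (0 : ℝ)..1, ∫ v in (0 : ℝ)..1, WeylW ω u v N ^ (2 * s)) ≤
        Cδ * (N : ℝ) ^ (2 * s - t + δ))
    (α : ℝ) (hα0 : 0 < α) (hα1 : α < 1) :
    ∃ ε₀ : ℝ, 0 < ε₀ ∧ ∀ ε : ℝ, 0 < ε → ε < ε₀ →
    ∀ δ : ℝ, 0 < δ →
    ∃ C' : ℝ, ∀ N : ℕ, 0 < N →
      ∀ L M : ℕ, L = ⌈(N : ℝ) ^ (2 + ε - α)⌉₊ → M = ⌈(N : ℝ) ^ ((k : ℝ) + 1 + ε - α)⌉₊ →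
      ((((Finset.range L ×ˢ Finset.range M).filter
          (fun p : ℕ × ℕ => ∃ x y : ℝ,
            x ∈ Set.Ico ((p.1 : ℝ) * (1 / (L : ℝ))) (((p.1 : ℝ) + 1) * (1 / (L : ℝ))) ∧
            y ∈ Set.Ico ((p.2 : ℝ) * (1 / (M : ℝ))) (((p.2 : ℝ) + 1) * (1 / (M : ℝ))) ∧
            (N : ℝ) ^ α ≤ WeylW ω x y N)).card : ℝ) ≤
        C' * ((L : ℝ) * (M : ℝ)) * (N : ℝ) ^ (2 * s * (1 - α) - t + δ)) := by
  obtain ⟨Cω, hCω0, hCω⟩ := poly_bound ω k hω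
  refine ⟨1, one_pos, ?_⟩
  intro ε hε _ δ hδ
  obtain ⟨Cδ, hCδ⟩ := hmean δ hδ
  have hπ := Real.pi_pos
  -- continuity of the integrand
  have hf_cont : ∀ N : ℕ, Continuous (Function.uncurry fun u v => WeylW ω u v N ^ (2*s)) := by
    intro N
    have : (Function.uncurry fun u v => WeylW ω u v N ^ (2*s))
        = fun p : ℝ × ℝ => (WeylW ω p.1 p.2 N) ^ (2*s) := rfl
    rw [this]
    apply Continuous.rpow_const (continuous_weylW ω N)
    intro p; right; positivity
  -- nonnegativity of the integral
  have hint_nonneg : ∀ N : ℕ,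
      0 ≤ ∫ u in (0:ℝ)..1, ∫ v in (0:ℝ)..1, WeylW ω u v N ^ (2*s) := by
    intro N
    apply intervalIntegral.integral_nonneg (by norm_num)
    intro u _
    apply intervalIntegral.integral_nonneg (by norm_num)
    intro v _
    exact Real.rpow_nonneg (weylW_nonneg ω u v N) _
  have hCδ0 : 0 ≤ Cδ := by
    have h1 := hCδ 1 one_pos
    have h2 := hint_nonneg 1
    rw [Nat.cast_one, Real.one_rpow, mul_one] at h1
    linarith
  set K₁ : ℝ := 2 + (4/ε) * (2:ℝ)^(ε/2) with hK₁def
  have hK₁ : 0 < K₁ := by positivity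
  set K : ℝ := 2*Real.pi*(1+Cω)*K₁ with hKdef
  have hK0 : 0 < K := by positivity
  set Q : ℝ := (2*K+1)^(2/ε) with hQdef
  have hQ0 : 0 < Q := Real.rpow_pos_of_pos (by linarith) _
  set E : ℝ := 2*s*(1-α) - t + δ with hEdef
  refine ⟨Cδ * 2^(2*s) + Q^|E|, ?_⟩
  intro N hN L M hLdef hMdef
  have hN1 : (1:ℝ) ≤ (N:ℝ) := by exact_mod_cast hN
  have hN0 : (0:ℝ) < N := by linarith
  have hL1 : 1 ≤ L := by
    rw [hLdef]; exact Nat.one_le_iff_ne_zero.mpr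
      (Nat.ceil_pos.mpr (Real.rpow_pos_of_pos hN0 _)).ne'
  have hM1 : 1 ≤ M := by
    rw [hMdef]; exact Nat.one_le_iff_ne_zero.mpr
      (Nat.ceil_pos.mpr (Real.rpow_pos_of_pos hN0 _)).ne'
  have hL0 : (0:ℝ) < L := by exact_mod_cast hL1
  have hM0 : (0:ℝ) < M := by exact_mod_cast hM1
  set R := (Finset.range L ×ˢ Finset.range M).filter
      (fun p : ℕ × ℕ => ∃ x y : ℝ,
        x ∈ Set.Ico ((p.1 : ℝ) * (1 / (L : ℝ))) (((p.1 : ℝ) + 1) * (1 / (L : ℝ))) ∧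
        y ∈ Set.Ico ((p.2 : ℝ) * (1 / (M : ℝ))) (((p.2 : ℝ) + 1) * (1 / (M : ℝ))) ∧
        (N : ℝ) ^ α ≤ WeylW ω x y N) with hRdef
  have hNEnonneg : 0 ≤ ((L:ℝ) * (M:ℝ)) * (N:ℝ)^E := by positivity
  by_cases hbig : Q ≤ (N:ℝ)
  case neg =>
    -- small N : trivial bound
    push_neg at hbig
    have hcard : (R.card : ℝ) ≤ (L:ℝ) * (M:ℝ) := by
      have h1 : R.card ≤ (Finset.range L ×ˢ Finset.range M).card := Finset.card_filter_le _ _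
      rw [Finset.card_product, Finset.card_range, Finset.card_range] at h1
      exact_mod_cast h1
    have hone : 1 ≤ Q^|E| * (N:ℝ)^E := by
      have e1 : (N:ℝ)^(-|E|) ≤ (N:ℝ)^E :=
        Real.rpow_le_rpow_of_exponent_le hN1 (neg_abs_le E)
      have e2 : Q^(-|E|) ≤ (N:ℝ)^(-|E|) :=
        Real.rpow_le_rpow_of_nonpos hN0 hbig.le (neg_nonpos.mpr (abs_nonneg E))
      have e3 : Q^|E| * Q^(-|E|) = 1 := by
        rw [← Real.rpow_add hQ0]; simp
      calc (1:ℝ) = Q^|E| * Q^(-|E|) := e3.symm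
        _ ≤ Q^|E| * (N:ℝ)^E := by
            apply mul_le_mul_of_nonneg_left (e2.trans e1) (Real.rpow_nonneg hQ0.le _)
    calc (R.card : ℝ) ≤ (L:ℝ) * (M:ℝ) := hcard
      _ ≤ (Q^|E| * (N:ℝ)^E) * ((L:ℝ) * (M:ℝ)) := by
          nlinarith [hone, mul_pos hL0 hM0]
      _ ≤ (Cδ * 2^(2*s) + Q^|E|) * ((L:ℝ) * (M:ℝ)) * (N:ℝ)^E := by
          have h2s : (0:ℝ) ≤ Cδ * 2^(2*s) :=
            mul_nonneg hCδ0 (Real.rpow_nonneg (by norm_num) _)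
          nlinarith [hNEnonneg, Real.rpow_nonneg hQ0.le |E|,
            mul_nonneg (mul_nonneg h2s (mul_pos hL0 hM0).le) (Real.rpow_nonneg hN0.le E)]
  case pos =>
    -- large N : Chebyshev
    set ζ₁ : ℝ := 1/(L:ℝ) with hζ₁def
    set ζ₂ : ℝ := 1/(M:ℝ) with hζ₂def
    have hζ₁0 : 0 < ζ₁ := by positivity
    have hζ₂0 : 0 < ζ₂ := by positivity
    have hLge : (N:ℝ)^(2+ε-α) ≤ (L:ℝ) := by
      rw [hLdef]; exact Nat.le_ceil _
    have hMge : (N:ℝ)^((k:ℝ)+1+ε-α) ≤ (M:ℝ) := by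
      rw [hMdef]; exact Nat.le_ceil _
    have hζ₁le : ζ₁ ≤ (N:ℝ)^(α-ε-2) := by
      have h1 : (N:ℝ)^(α-ε-2) = 1/(N:ℝ)^(2+ε-α) := by
        rw [show α-ε-2 = -(2+ε-α) by ring, Real.rpow_neg hN0.le, one_div]
      rw [h1, hζ₁def]
      apply one_div_le_one_div_of_le (Real.rpow_pos_of_pos hN0 _) hLge
    have hζ₂le : ζ₂ ≤ (N:ℝ)^(α-ε-((k:ℝ)+1)) := by
      have h1 : (N:ℝ)^(α-ε-((k:ℝ)+1)) = 1/(N:ℝ)^((k:ℝ)+1+ε-α) := by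
        rw [show α-ε-((k:ℝ)+1) = -((k:ℝ)+1+ε-α) by ring, Real.rpow_neg hN0.le, one_div]
      rw [h1, hζ₂def]
      apply one_div_le_one_div_of_le (Real.rpow_pos_of_pos hN0 _) hMge
    -- the diff bound is at most N^α/2
    have hNε1 : (1:ℝ) ≤ (N:ℝ)^(ε/2) := Real.one_le_rpow hN1 (by positivity)
    have hNK : 2*K + 1 ≤ (N:ℝ)^(ε/2) := by
      have h1 : Q^(ε/2) ≤ (N:ℝ)^(ε/2) :=
        Real.rpow_le_rpow hQ0.le hbig (by positivity)
      have h2 : Q^(ε/2) = 2*K+1 := by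
        rw [hQdef, ← Real.rpow_mul (by linarith : (0:ℝ) ≤ 2*K+1),
          show (2/ε)*(ε/2) = 1 by field_simp, Real.rpow_one]
      linarith
    have hWlow : ∀ p ∈ R, ∀ u ∈ Set.Icc ((p.1:ℝ)*ζ₁) (((p.1:ℝ)+1)*ζ₁),
        ∀ v ∈ Set.Icc ((p.2:ℝ)*ζ₂) (((p.2:ℝ)+1)*ζ₂), (N:ℝ)^α/2 ≤ WeylW ω u v N := by
      intro p hp u hu v hv
      rw [hRdef, Finset.mem_filter] at hp
      obtain ⟨-, x, y, hxI, hyI, hWxy⟩ := hp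
      have hexp1 : ((p.1:ℝ)+1)*ζ₁ = (p.1:ℝ)*ζ₁ + ζ₁ := by ring
      have hexp2 : ((p.2:ℝ)+1)*ζ₂ = (p.2:ℝ)*ζ₂ + ζ₂ := by ring
      have hux : |u - x| ≤ ζ₁ := by
        rcases hu with ⟨hu1, hu2⟩
        rcases hxI with ⟨hx1, hx2⟩
        rw [abs_le]
        constructor <;> linarith
      have hvy : |v - y| ≤ ζ₂ := by
        rcases hv with ⟨hv1, hv2⟩
        rcases hyI with ⟨hy1, hy2⟩
        rw [abs_le]
        constructor <;> linarith
      have hdiff := weylW_diff ω N u v x y ζ₁ ζ₂ (Cω * (N:ℝ)^(k:ℕ))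
        hux hvy hζ₁0.le hζ₂0.le (hCω N)
      -- bound the right-hand side
      have hB1 : (N:ℝ)*(ζ₁*(N:ℝ) + ζ₂*(Cω*(N:ℝ)^(k:ℕ))) ≤ (1+Cω)*(N:ℝ)^(α-ε) := by
        have c2 : (N:ℝ)*((N:ℝ)) = (N:ℝ)^(((2:ℕ)):ℝ) := by
          rw [Real.rpow_natCast]; ring
        have ck : (N:ℝ)*(N:ℝ)^(k:ℕ) = (N:ℝ)^((((k+1:ℕ)):ℝ)) := by
          rw [Real.rpow_natCast, pow_succ]; ring
        have e1 : ζ₁ * (N:ℝ)^(((2:ℕ)):ℝ) ≤ (N:ℝ)^(α-ε) := by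
          calc ζ₁ * (N:ℝ)^(((2:ℕ)):ℝ) ≤ (N:ℝ)^(α-ε-2) * (N:ℝ)^(((2:ℕ)):ℝ) :=
                mul_le_mul_of_nonneg_right hζ₁le (Real.rpow_nonneg hN0.le _)
            _ = (N:ℝ)^(α-ε) := by
                rw [← Real.rpow_add hN0]; congr 1; push_cast; ring
        have e2 : ζ₂ * (N:ℝ)^((((k+1:ℕ)):ℝ)) ≤ (N:ℝ)^(α-ε) := by
          calc ζ₂ * (N:ℝ)^((((k+1:ℕ)):ℝ))
              ≤ (N:ℝ)^(α-ε-((k:ℝ)+1)) * (N:ℝ)^((((k+1:ℕ)):ℝ)) :=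
                mul_le_mul_of_nonneg_right hζ₂le (Real.rpow_nonneg hN0.le _)
            _ = (N:ℝ)^(α-ε) := by
                rw [← Real.rpow_add hN0]; congr 1; push_cast; ring
        calc (N:ℝ)*(ζ₁*(N:ℝ) + ζ₂*(Cω*(N:ℝ)^(k:ℕ)))
            = ζ₁ * ((N:ℝ)*(N:ℝ)) + Cω * (ζ₂ * ((N:ℝ)*(N:ℝ)^(k:ℕ))) := by ring
          _ = ζ₁ * (N:ℝ)^(((2:ℕ)):ℝ) + Cω * (ζ₂ * (N:ℝ)^((((k+1:ℕ)):ℝ))) := by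
              rw [c2, ck]
          _ ≤ (N:ℝ)^(α-ε) + Cω * (N:ℝ)^(α-ε) := by
              have := mul_le_mul_of_nonneg_left e2 hCω0
              linarith
          _ = (1+Cω)*(N:ℝ)^(α-ε) := by ring
      have hH2 : ∑ h ∈ Finset.Icc (-(N:ℤ)) (N:ℤ), (1 / (|(h : ℝ)| + 1))
          ≤ K₁ * (N:ℝ)^(ε/2) := by
        have hlog : Real.log ((N:ℝ)+1) ≤ (2/ε) * ((2:ℝ)^(ε/2) * (N:ℝ)^(ε/2)) := by
          have l1 : Real.log ((N:ℝ)+1) ≤ ((N:ℝ)+1)^(ε/2)/(ε/2) :=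
            Real.log_le_rpow_div (by positivity) (by positivity)
          have l2 : ((N:ℝ)+1)^(ε/2) ≤ (2*(N:ℝ))^(ε/2) :=
            Real.rpow_le_rpow (by positivity) (by linarith) (by positivity)
          have l3 : (2*(N:ℝ))^(ε/2) = (2:ℝ)^(ε/2) * (N:ℝ)^(ε/2) :=
            Real.mul_rpow (by norm_num) hN0.le
          have l4 : ((N:ℝ)+1)^(ε/2)/(ε/2) ≤ ((2:ℝ)^(ε/2) * (N:ℝ)^(ε/2))/(ε/2) := by
            apply div_le_div_of_nonneg_right ?_ (by positivity)
            rw [← l3]; exact l2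
          have l5 : ((2:ℝ)^(ε/2) * (N:ℝ)^(ε/2))/(ε/2)
              = (2/ε) * ((2:ℝ)^(ε/2) * (N:ℝ)^(ε/2)) := by
            field_simp
          calc Real.log ((N:ℝ)+1) ≤ ((N:ℝ)+1)^(ε/2)/(ε/2) := l1
            _ ≤ ((2:ℝ)^(ε/2) * (N:ℝ)^(ε/2))/(ε/2) := l4
            _ = (2/ε) * ((2:ℝ)^(ε/2) * (N:ℝ)^(ε/2)) := l5
        have hH := H_bound N
        have h2pos : (0:ℝ) < (2:ℝ)^(ε/2) := by positivity
        calc ∑ h ∈ Finset.Icc (-(N:ℤ)) (N:ℤ), (1 / (|(h : ℝ)| + 1))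
            ≤ 2 + 2 * Real.log ((N:ℝ)+1) := by push_cast at hH ⊢; linarith
          _ ≤ 2 + 2 * ((2/ε) * ((2:ℝ)^(ε/2) * (N:ℝ)^(ε/2))) := by linarith
          _ = 2 + (4/ε) * (2:ℝ)^(ε/2) * (N:ℝ)^(ε/2) := by ring
          _ ≤ K₁ * (N:ℝ)^(ε/2) := by
              have hexp : K₁ * (N:ℝ)^(ε/2)
                  = 2*(N:ℝ)^(ε/2) + (4/ε)*(2:ℝ)^(ε/2)*(N:ℝ)^(ε/2) := by
                rw [hK₁def]; ring
              linarith
      have hHnonneg : 0 ≤ ∑ h ∈ Finset.Icc (-(N:ℤ)) (N:ℤ), (1 / (|(h : ℝ)| + 1)) := by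
        apply Finset.sum_nonneg; intro h _
        have : (0:ℝ) < |(h:ℝ)| + 1 := by positivity
        positivity
      have hBtot : (∑ h ∈ Finset.Icc (-(N:ℤ)) (N:ℤ), (1 / (|(h : ℝ)| + 1))) *
          (2 * Real.pi * ((N:ℝ) * (ζ₁ * (N:ℝ) + ζ₂ * (Cω * (N:ℝ)^(k:ℕ)))))
          ≤ K * (N:ℝ)^(α-ε/2) := by
        have step : (∑ h ∈ Finset.Icc (-(N:ℤ)) (N:ℤ), (1 / (|(h : ℝ)| + 1))) *
            (2 * Real.pi * ((N:ℝ) * (ζ₁ * (N:ℝ) + ζ₂ * (Cω * (N:ℝ)^(k:ℕ)))))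
            ≤ (K₁ * (N:ℝ)^(ε/2)) * (2 * Real.pi * ((1+Cω)*(N:ℝ)^(α-ε))) := by
          apply mul_le_mul hH2 ?_ ?_ (by positivity)
          · exact mul_le_mul_of_nonneg_left hB1 (by positivity)
          · have hinner : (0:ℝ) ≤ (N:ℝ) * (ζ₁ * (N:ℝ) + ζ₂ * (Cω * (N:ℝ)^(k:ℕ))) := by
              positivity
            positivity
        have heq : (K₁ * (N:ℝ)^(ε/2)) * (2 * Real.pi * ((1+Cω)*(N:ℝ)^(α-ε)))
            = K * (N:ℝ)^(α-ε/2) := by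
          rw [hKdef, show (N:ℝ)^(α-ε/2) = (N:ℝ)^(ε/2) * (N:ℝ)^(α-ε) by
            rw [← Real.rpow_add hN0]; congr 1; ring]
          ring
        linarith
      have hBfin : K * (N:ℝ)^(α-ε/2) ≤ (N:ℝ)^α/2 := by
        have hA0 : (0:ℝ) < (N:ℝ)^(α-ε/2) := Real.rpow_pos_of_pos hN0 _
        have hAC : (N:ℝ)^(α-ε/2) * (N:ℝ)^(ε/2) = (N:ℝ)^α := by
          rw [← Real.rpow_add hN0]; congr 1; ring
        have h1 : (N:ℝ)^(α-ε/2) * (2*K+1) ≤ (N:ℝ)^(α-ε/2) * (N:ℝ)^(ε/2) :=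
          mul_le_mul_of_nonneg_left hNK hA0.le
        rw [hAC] at h1
        have hexp : (N:ℝ)^(α-ε/2) * (2*K+1) = 2*(K*(N:ℝ)^(α-ε/2)) + (N:ℝ)^(α-ε/2) := by
          ring
        linarith
      have habs := hdiff.trans (hBtot.trans hBfin)
      have := (abs_le.mp habs).1
      linarith
    -- Chebyshev
    set c : ℝ := ((N:ℝ)^α/2)^(2*s) with hcdef
    have hNα0 : (0:ℝ) < (N:ℝ)^α := Real.rpow_pos_of_pos hN0 _
    have hc0 : 0 < c := Real.rpow_pos_of_pos (by positivity) _
    set J : ℕ × ℕ → ℝ := fun p =>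
      ∫ u in ((p.1:ℝ)*ζ₁)..(((p.1:ℝ)+1)*ζ₁),
        ∫ v in ((p.2:ℝ)*ζ₂)..(((p.2:ℝ)+1)*ζ₂), WeylW ω u v N ^ (2*s) with hJdef
    have hJnonneg : ∀ p : ℕ × ℕ, 0 ≤ J p := by
      intro p
      apply intervalIntegral.integral_nonneg (by nlinarith [hζ₁0.le])
      intro u _
      apply intervalIntegral.integral_nonneg (by nlinarith [hζ₂0.le])
      intro v _
      exact Real.rpow_nonneg (weylW_nonneg ω u v N) _
    have hJlow : ∀ p ∈ R, c * (ζ₁ * ζ₂) ≤ J p := by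
      intro p hp
      have h := square_lower (fun u v => WeylW ω u v N ^ (2*s)) (hf_cont N) c
        ((p.1:ℝ)*ζ₁) (((p.1:ℝ)+1)*ζ₁) ((p.2:ℝ)*ζ₂) (((p.2:ℝ)+1)*ζ₂)
        (by nlinarith [hζ₁0.le]) (by nlinarith [hζ₂0.le]) ?_
      · have e1 : (((p.1:ℝ)+1)*ζ₁ - (p.1:ℝ)*ζ₁) = ζ₁ := by ring
        have e2 : (((p.2:ℝ)+1)*ζ₂ - (p.2:ℝ)*ζ₂) = ζ₂ := by ring
        rw [e1, e2] at h
        exact h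
      · intro u hu v hv
        rw [hcdef]
        exact Real.rpow_le_rpow (by positivity) (hWlow p hp u hu v hv) (by positivity)
    have hcard_sum : (R.card : ℝ) * (c * (ζ₁ * ζ₂)) ≤ ∑ p ∈ R, J p := by
      have := Finset.card_nsmul_le_sum R J (c * (ζ₁ * ζ₂)) hJlow
      rwa [nsmul_eq_mul] at this
    have hsum_all : ∑ p ∈ R, J p ≤ ∑ p ∈ Finset.range L ×ˢ Finset.range M, J p :=
      Finset.sum_le_sum_of_subset_of_nonneg (Finset.filter_subset _ _)
        (fun p _ _ => hJnonneg p)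
    have hdecomp : ∑ p ∈ Finset.range L ×ˢ Finset.range M, J p
        = ∫ u in (0:ℝ)..1, ∫ v in (0:ℝ)..1, WeylW ω u v N ^ (2*s) := by
      rw [Finset.sum_product]
      exact (integral_decomp (fun u v => WeylW ω u v N ^ (2*s)) (hf_cont N)
        L M hL0.ne' hM0.ne').symm
    have hchain : (R.card : ℝ) * (c * (ζ₁ * ζ₂)) ≤ Cδ * (N:ℝ)^(2*s - t + δ) := by
      calc (R.card : ℝ) * (c * (ζ₁ * ζ₂)) ≤ ∑ p ∈ R, J p := hcard_sum
        _ ≤ ∑ p ∈ Finset.range L ×ˢ Finset.range M, J p := hsum_all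
        _ = ∫ u in (0:ℝ)..1, ∫ v in (0:ℝ)..1, WeylW ω u v N ^ (2*s) := hdecomp
        _ ≤ Cδ * (N:ℝ)^(2*s - t + δ) := hCδ N hN
    -- unfold c and divide
    have hprod_pos : (0:ℝ) < c * (ζ₁ * ζ₂) := by positivity
    have hkey : (R.card : ℝ) ≤ Cδ * (N:ℝ)^(2*s - t + δ) / (c * (ζ₁ * ζ₂)) :=
      (le_div_iff₀ hprod_pos).mpr hchain
    have hceq : Cδ * (N:ℝ)^(2*s - t + δ) / (c * (ζ₁ * ζ₂))
        = (Cδ * 2^(2*s)) * ((L:ℝ)*(M:ℝ)) * (N:ℝ)^E := by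
      rw [div_eq_iff hprod_pos.ne']
      rw [hcdef, Real.div_rpow hNα0.le (by norm_num : (0:ℝ) ≤ 2),
        ← Real.rpow_mul hN0.le, hζ₁def, hζ₂def]
      have h2s0 : (0:ℝ) < (2:ℝ)^(2*s) := by positivity
      have hNE : (N:ℝ)^E * (N:ℝ)^(α*2*s) = (N:ℝ)^(2*s - t + δ) := by
        rw [← Real.rpow_add hN0]; congr 1; rw [hEdef]; ring
      field_simp
      rw [← hNE]; ring
    rw [hceq] at hkey
    calc (R.card : ℝ) ≤ (Cδ * 2^(2*s)) * ((L:ℝ)*(M:ℝ)) * (N:ℝ)^E := hkey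
      _ ≤ (Cδ * 2^(2*s) + Q^|E|) * ((L:ℝ) * (M:ℝ)) * (N:ℝ)^E := by
          have hB : 0 ≤ Q^|E| * (((L:ℝ)*(M:ℝ)) * (N:ℝ)^E) :=
            mul_nonneg (Real.rpow_nonneg hQ0.le _) hNEnonneg
          have hexp : (Cδ * 2^(2*s) + Q^|E|) * ((L:ℝ) * (M:ℝ)) * (N:ℝ)^E
              = (Cδ * 2^(2*s)) * ((L:ℝ)*(M:ℝ)) * (N:ℝ)^E
                + Q^|E| * (((L:ℝ)*(M:ℝ)) * (N:ℝ)^E) := by ring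
          linarith
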